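/- For all integers k ≥ 1 and i ≥ 0 with 2i ≤ k−1: S_{k+1, i+1} = 2 · S_{k,i}. -/

import Mathlib

open Finset

def Anat (n s : ℕ) : ℕ :=
  ∑ m ∈ Finset.range (n+1), n.choose (s+2*m) * ((s+2*m).choose m) * 2^(n - s - 2*m)

lemma Anat_rec0 (n : ℕ) : Anat (n+1) 0 = 2 * Anat n 0 + 2 * Anat n 1 := by
  unfold Anat
  rw [Finset.sum_range_succ' (fun m => (n+1).choose (0+2*m) * ((0+2*m).choose m) * 2^((n+1) - 0 - 2*m))]
  have h1 : ∀ p ∈ Finset.range (n+1),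
      (n+1).choose (0+2*(p+1)) * ((0+2*(p+1)).choose (p+1)) * 2^((n+1) - 0 - 2*(p+1))
      = 2 * (n.choose (1+2*p) * ((1+2*p).choose p) * 2^(n - 1 - 2*p))
        + 2 * (n.choose (0+2*(p+1)) * ((0+2*(p+1)).choose (p+1)) * 2^(n - 0 - 2*(p+1))) := by
    intro p _
    have hp : (n+1).choose (0+2*(p+1)) = n.choose (2*p+1) + n.choose (2*p+2) := by
      rw [show 0+2*(p+1) = (2*p+1)+1 by ring]; exact Nat.choose_succ_succ' n (2*p+1)
    have hmid : ((0+2*(p+1)).choose (p+1)) = 2 * ((2*p+1).choose p) := by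
      rw [show 0+2*(p+1) = (2*p+1)+1 by ring, Nat.choose_succ_succ', Nat.choose_symm_half]
      ring
    rw [hp, hmid, add_mul, add_mul]
    congr 1
    · -- n.choose (2p+1) * (2 * C(2p+1,p)) * 2^(n+1-2(p+1)) = 2*(n.choose (1+2p)*C(1+2p,p)*2^(n-1-2p))
      rw [show (n+1) - 0 - 2*(p+1) = n - 1 - 2*p by omega, show 2*p+1 = 1+2*p by ring]
      ring
    · -- n.choose (2p+2) * (2*C(2p+1,p)) * 2^(n+1-2(p+1)) = 2*(n.choose(2(p+1)) * C(2(p+1),p+1) * 2^(n-2(p+1)))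
      rw [show (0:ℕ)+2*(p+1) = 2*p+2 by ring]
      rcases le_or_gt (2*p+2) n with h | h
      · rw [show (n+1) - 0 - 2*(p+1) = (n - 0 - 2*(p+1)) + 1 by omega, pow_succ]
        ring
      · rw [Nat.choose_eq_zero_of_lt h]; ring
  rw [Finset.sum_congr rfl h1, Finset.sum_add_distrib, ← Finset.mul_sum, ← Finset.mul_sum]
  -- now: 2*∑_{p∈range(n+1)} (odd terms) + 2*∑ (even terms shifted) + f 0 = 2*Anat n 0 + 2*Anat n 1
  have hA1 : ∑ p ∈ Finset.range (n+1), n.choose (1+2*p) * ((1+2*p).choose p) * 2^(n-1-2*p)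
      = ∑ m ∈ Finset.range (n+1), n.choose (1+2*m) * ((1+2*m).choose m) * 2^(n-1-2*m) := rfl
  have hA0 : (2:ℕ)^(n+1) + 2 * ∑ p ∈ Finset.range (n+1),
        n.choose (0+2*(p+1)) * ((0+2*(p+1)).choose (p+1)) * 2^(n - 0 - 2*(p+1))
      = 2 * ∑ m ∈ Finset.range (n+1), n.choose (0+2*m) * ((0+2*m).choose m) * 2^(n - 0 - 2*m) := by
    rw [Finset.sum_range_succ' (fun m => n.choose (0+2*m) * ((0+2*m).choose m) * 2^(n - 0 - 2*m)) n]
    simp only [Nat.mul_zero, Nat.add_zero, Nat.choose_zero_right, Nat.choose_self]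
    rw [Finset.sum_range_succ]
    rw [Nat.choose_eq_zero_of_lt (by omega : n < 0+2*(n+1))]
    simp [mul_add, pow_succ]
    ring
  have e0 : (n+1).choose (0+2*0) * ((0+2*0).choose 0) * 2^((n+1) - 0 - 2*0) = 2^(n+1) := by simp
  rw [e0, ← hA0]
  omega

lemma Anat_recS (n s : ℕ) : Anat (n+1) (s+1) = Anat n s + 2 * Anat n (s+1) + Anat n (s+2) := by
  unfold Anat
  -- Pascal on the first factor, termwise
  have h1 : ∀ m ∈ Finset.range (n+2),
      (n+1).choose ((s+1)+2*m) * (((s+1)+2*m).choose m) * 2^((n+1) - (s+1) - 2*m)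
      = n.choose (s+2*m) * (((s+1)+2*m).choose m) * 2^(n - s - 2*m)
        + 2 * (n.choose ((s+1)+2*m) * (((s+1)+2*m).choose m) * 2^(n - (s+1) - 2*m)) := by
    intro m _
    have hp : (n+1).choose ((s+1)+2*m) = n.choose (s+2*m) + n.choose ((s+1)+2*m) := by
      rw [show (s+1)+2*m = (s+2*m)+1 by ring]; exact Nat.choose_succ_succ' n (s+2*m)
    rw [hp, add_mul, add_mul, show (n+1) - (s+1) - 2*m = n - s - 2*m by omega]
    congr 1
    rcases le_or_gt ((s+1)+2*m) n with h | h
    · rw [show n - s - 2*m = (n - (s+1) - 2*m) + 1 by omega, pow_succ]; ring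
    · rw [Nat.choose_eq_zero_of_lt h]; ring
  rw [Finset.sum_congr rfl h1, Finset.sum_add_distrib]
  have hQ : ∑ m ∈ Finset.range (n+2),
      2 * (n.choose ((s+1)+2*m) * (((s+1)+2*m).choose m) * 2^(n - (s+1) - 2*m))
      = 2 * ∑ m ∈ Finset.range (n+1),
          n.choose ((s+1)+2*m) * (((s+1)+2*m).choose m) * 2^(n - (s+1) - 2*m) := by
    rw [Finset.sum_range_succ, Nat.choose_eq_zero_of_lt (show n < (s+1)+2*(n+1) by omega)]
    simp [Finset.mul_sum]
  have hP : ∑ m ∈ Finset.range (n+2),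
      n.choose (s+2*m) * (((s+1)+2*m).choose m) * 2^(n - s - 2*m)
      = (∑ m ∈ Finset.range (n+1), n.choose (s+2*m) * ((s+2*m).choose m) * 2^(n - s - 2*m))
        + ∑ m ∈ Finset.range (n+1),
            n.choose ((s+2)+2*m) * (((s+2)+2*m).choose m) * 2^(n - (s+2) - 2*m) := by
    rw [Finset.sum_range_succ'
      (fun m => n.choose (s+2*m) * (((s+1)+2*m).choose m) * 2^(n - s - 2*m)) (n+1)]
    have h2 : ∀ p ∈ Finset.range (n+1),
        n.choose (s+2*(p+1)) * (((s+1)+2*(p+1)).choose (p+1)) * 2^(n - s - 2*(p+1))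
        = n.choose ((s+2)+2*p) * (((s+2)+2*p).choose p) * 2^(n - (s+2) - 2*p)
          + n.choose (s+2*(p+1)) * ((s+2*(p+1)).choose (p+1)) * 2^(n - s - 2*(p+1)) := by
      intro p _
      have hm : ((s+1)+2*(p+1)).choose (p+1)
          = ((s+2)+2*p).choose p + (s+2*(p+1)).choose (p+1) := by
        rw [show (s+1)+2*(p+1) = ((s+2)+2*p)+1 by ring]
        rw [Nat.choose_succ_succ' ((s+2)+2*p) p, show (s+2)+2*p = s+2*(p+1) by ring]
      rw [hm, mul_add, show s+2*(p+1) = (s+2)+2*p by ring,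
        show n - s - 2*(p+1) = n - (s+2) - 2*p by omega]
      ring
    rw [Finset.sum_congr rfl h2, Finset.sum_add_distrib]
    have hAs : ∑ m ∈ Finset.range (n+1), n.choose (s+2*m) * ((s+2*m).choose m) * 2^(n - s - 2*m)
        = (∑ p ∈ Finset.range n,
            n.choose (s+2*(p+1)) * ((s+2*(p+1)).choose (p+1)) * 2^(n - s - 2*(p+1)))
          + n.choose s * 2^(n - s) := by
      rw [Finset.sum_range_succ'
        (fun m => n.choose (s+2*m) * ((s+2*m).choose m) * 2^(n - s - 2*m)) n]
      simp
    have hext : ∑ p ∈ Finset.range (n+1),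
        n.choose (s+2*(p+1)) * ((s+2*(p+1)).choose (p+1)) * 2^(n - s - 2*(p+1))
        = ∑ p ∈ Finset.range n,
            n.choose (s+2*(p+1)) * ((s+2*(p+1)).choose (p+1)) * 2^(n - s - 2*(p+1)) := by
      rw [Finset.sum_range_succ, Nat.choose_eq_zero_of_lt (show n < s+2*(n+1) by omega)]
      simp
    rw [hext, hAs]
    simp
    omega
  rw [hQ, hP]
  omega

lemma Anat_eq (n : ℕ) : ∀ s, Anat n s = (2*n).choose (n+s) := by
  induction n with
  | zero =>
    intro s
    unfold Anat
    cases s <;> simp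
  | succ n ih =>
    intro s
    cases s with
    | zero =>
      rw [Anat_rec0, ih 0, ih 1]
      have h1 : (2*(n+1)).choose (n+1) = (2*n+1).choose n + (2*n+1).choose (n+1) := by
        rw [show 2*(n+1) = (2*n+1)+1 by ring, Nat.choose_succ_succ' (2*n+1) n]
      rw [h1, ← Nat.choose_symm_half n, Nat.choose_succ_succ' (2*n) n]
      ring_nf
    | succ s =>
      rw [Anat_recS, ih s, ih (s+1), ih (s+2)]
      have h1 : (2*(n+1)).choose ((n+1)+(s+1))
          = (2*n+1).choose (n+s+1) + (2*n+1).choose (n+s+2) := by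
        rw [show 2*(n+1) = (2*n+1)+1 by ring, show (n+1)+(s+1) = (n+s+1)+1 by ring,
          Nat.choose_succ_succ' (2*n+1) (n+s+1)]
      rw [h1, show 2*n+1 = (2*n)+1 by rfl, show n+s+2 = (n+s+1)+1 by rfl,
        Nat.choose_succ_succ' (2*n) (n+s), Nat.choose_succ_succ' (2*n) (n+s+1)]
      have : n+(s+1) = n+s+1 := by ring
      rw [this]
      have : n+(s+2) = (n+s+1)+1 := by ring
      rw [this]
      ring

lemma vand (i n : ℕ) :
    (∑ s ∈ Finset.range (i+1), (2*i).choose (i+s) * (2*n).choose (n+s))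
      + ∑ s ∈ Finset.range n, (2*i).choose (i+s+1) * (2*n).choose (n+s+1)
    = (2*i+2*n).choose (i+n) := by
  rw [Nat.add_choose_eq, Nat.sum_antidiagonal_eq_sum_range_succ_mk]
  have : (i+n).succ = (i+1) + n := by omega
  rw [this, Finset.sum_range_add (fun j => (2*i).choose j * (2*n).choose (i+n-j)) (i+1) n]
  congr 1
  · -- reflect
    rw [← Finset.sum_range_reflect (fun j => (2*i).choose j * (2*n).choose (i+n-j)) (i+1)]
    refine Finset.sum_congr rfl fun s hs => ?_
    simp only [Finset.mem_range] at hs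
    have hsi : s ≤ i := by omega
    have h1 : (i+1) - 1 - s = i - s := by omega
    have h2 : (2*i).choose (i - s) = (2*i).choose (i+s) := by
      rw [show i - s = 2*i - (i+s) by omega]
      exact Nat.choose_symm (by omega)
    have h3 : i + n - (i - s) = n + s := by omega
    rw [h1, h2, h3]
  · refine Finset.sum_congr rfl fun s hs => ?_
    simp only [Finset.mem_range] at hs
    have h1 : i + n - ((i+1) + s) = n - (s+1) := by omega
    have h2 : (2*n).choose (n - (s+1)) = (2*n).choose (n+s+1) := by
      rw [show n - (s+1) = 2*n - (n+s+1) by omega]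
      exact Nat.choose_symm (by omega)
    rw [h1, h2, show (i+1)+s = i+s+1 by ring]

lemma inner_eq (n s : ℕ) (hs : s ≤ n) :
    ∑ m ∈ Finset.range ((n - s)/2 + 1),
      (n.choose (s + 2*m) : ℝ) * ((s + 2*m).choose m : ℝ) / 2 ^ (2*m + (s - 1))
    = ((2*n).choose (n + s) : ℝ) / 2 ^ ((n - s) + (s - 1)) := by
  have hext : ∑ m ∈ Finset.range ((n - s)/2 + 1),
      (n.choose (s + 2*m) : ℝ) * ((s + 2*m).choose m : ℝ) / 2 ^ (2*m + (s - 1))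
      = ∑ m ∈ Finset.range (n+1),
        (n.choose (s + 2*m) : ℝ) * ((s + 2*m).choose m : ℝ) / 2 ^ (2*m + (s - 1)) := by
    refine Finset.sum_subset (Finset.range_subset_range.2 (by omega)) (fun m hm hm' => ?_)
    simp only [Finset.mem_range] at hm hm'
    rw [Nat.choose_eq_zero_of_lt (show n < s + 2*m by omega)]
    simp
  rw [hext, show ((2*n).choose (n+s) : ℝ) = ((Anat n s : ℕ) : ℝ) by rw [Anat_eq]]
  unfold Anat
  push_cast
  rw [Finset.sum_div]
  refine Finset.sum_congr rfl fun m _ => ?_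
  rcases le_or_gt (s + 2*m) n with h | h
  · rw [show (n-s)+(s-1) = (n - s - 2*m) + (2*m+(s-1)) by omega, pow_add]
    rw [div_eq_div_iff (by positivity) (by positivity)]
    ring
  · rw [Nat.choose_eq_zero_of_lt h]
    simp

def Gnat (i n s : ℕ) : ℕ := (2*i).choose (i+s) * (2*n).choose (n+s)

/-- The combinatorial quantity `S_{k,i}` from the study of iterated five-term
recurrence coefficients.  Here `s - 1` and `k - 2*i - s` denote truncated natural
subtraction, so `s - 1 = max {0, s-1}`. -/
noncomputable def Squant (k i : ℕ) : ℝ :=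
  ∑ s ∈ Finset.range (min i (k - 2 * i) + 1),
    ((2 * i).choose (s + i) : ℝ) *
      ∑ m ∈ Finset.range ((k - 2 * i - s) / 2 + 1),
        ((k - 2 * i).choose (s + 2 * m) : ℝ) * ((s + 2 * m).choose m : ℝ) /
          2 ^ (2 * m + (s - 1))

lemma Squant_closed (k i : ℕ) (h : 2*i ≤ k) :
    Squant k i = ((2*(k-i)).choose (k-i) : ℝ) / 2 ^ (k - 2*i) := by
  unfold Squant
  set n := k - 2*i with hn
  have hki : k - i = i + n := by omega
  rw [hki]
  -- replace inner sums
  have step1 : ∑ s ∈ Finset.range (min i n + 1),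
      ((2 * i).choose (s + i) : ℝ) *
        ∑ m ∈ Finset.range ((n - s) / 2 + 1),
          (n.choose (s + 2 * m) : ℝ) * ((s + 2 * m).choose m : ℝ) / 2 ^ (2 * m + (s - 1))
      = ∑ s ∈ Finset.range (min i n + 1),
        ((2 * i).choose (s + i) : ℝ) * (((2*n).choose (n + s) : ℝ) / 2 ^ ((n - s) + (s - 1))) := by
    refine Finset.sum_congr rfl fun s hs => ?_
    simp only [Finset.mem_range] at hs
    rw [inner_eq n s (by omega)]
  rw [step1, Finset.sum_range_succ'
    (fun s => ((2 * i).choose (s + i) : ℝ) * (((2*n).choose (n + s) : ℝ) / 2 ^ ((n - s) + (s - 1))))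
    (min i n)]
  -- fold into Gnat
  have hgzero : ((2 * i).choose (0 + i) : ℝ) * (((2*n).choose (n + 0) : ℝ) / 2 ^ ((n - 0) + (0 - 1)))
      = (Gnat i n 0 : ℝ) / 2 ^ n := by
    unfold Gnat
    push_cast
    norm_num
    ring
  have hterm : ∀ s ∈ Finset.range (min i n),
      ((2 * i).choose ((s+1) + i) : ℝ) * (((2*n).choose (n + (s+1)) : ℝ) / 2 ^ ((n - (s+1)) + ((s+1) - 1)))
      = (Gnat i n (s+1) : ℝ) / 2 ^ (n-1) := by
    intro s hs
    simp only [Finset.mem_range] at hs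
    unfold Gnat
    rw [show (n - (s+1)) + ((s+1) - 1) = n - 1 by omega, show (s+1) + i = i+(s+1) by ring]
    push_cast
    ring
  rw [Finset.sum_congr rfl hterm, hgzero]
  -- the folded Vandermonde identity
  have hE1 : ∑ s ∈ Finset.range i, Gnat i n (s+1) = ∑ s ∈ Finset.range (min i n), Gnat i n (s+1) := by
    refine (Finset.sum_subset (Finset.range_subset_range.2 (by omega)) fun s hs hs' => ?_).symm
    simp only [Finset.mem_range] at hs hs'
    unfold Gnat
    rw [Nat.choose_eq_zero_of_lt (show 2*n < n + (s+1) by omega)]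
    simp
  have hE2 : ∑ s ∈ Finset.range n, Gnat i n (s+1) = ∑ s ∈ Finset.range (min i n), Gnat i n (s+1) := by
    refine (Finset.sum_subset (Finset.range_subset_range.2 (by omega)) fun s hs hs' => ?_).symm
    simp only [Finset.mem_range] at hs hs'
    unfold Gnat
    rw [Nat.choose_eq_zero_of_lt (show 2*i < i + (s+1) by omega)]
    simp
  have hfold : Gnat i n 0 + 2 * ∑ s ∈ Finset.range (min i n), Gnat i n (s+1)
      = (2*(i+n)).choose (i+n) := by
    rw [show 2*(i+n) = 2*i+2*n by ring, ← vand i n]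
    rw [Finset.sum_range_succ' (fun s => (2*i).choose (i+s) * (2*n).choose (n+s)) i]
    have e1 : ∑ s ∈ Finset.range i, (2*i).choose (i+(s+1)) * (2*n).choose (n+(s+1))
        = ∑ s ∈ Finset.range i, Gnat i n (s+1) := rfl
    have e2 : ∑ s ∈ Finset.range n, (2*i).choose (i+s+1) * (2*n).choose (n+s+1)
        = ∑ s ∈ Finset.range n, Gnat i n (s+1) := by
      refine Finset.sum_congr rfl fun s _ => ?_
      unfold Gnat
      rw [show i+(s+1) = i+s+1 by ring, show n+(s+1) = n+s+1 by ring]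
    rw [e1, e2, hE1, hE2]
    unfold Gnat
    simp
    omega
  have hcast : ((2*(i+n)).choose (i+n) : ℝ)
      = (Gnat i n 0 : ℝ) + 2 * ∑ s ∈ Finset.range (min i n), (Gnat i n (s+1) : ℝ) := by
    rw [← hfold]
    push_cast
    ring
  rw [hcast, ← Finset.sum_div]
  rcases Nat.eq_zero_or_pos (min i n) with hm | hm
  · rw [hm]
    simp
  · have hn1 : 1 ≤ n := le_trans hm (min_le_right i n)
    have h2n : (2:ℝ) ^ n = 2 * 2 ^ (n-1) := by
      rw [← pow_succ']
      congr 1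
      omega
    rw [h2n]
    have hne : (2:ℝ) ^ (n-1) ≠ 0 := by positivity
    field_simp
    ring

theorem Squant_doubling (k i : ℕ) (hk : 1 ≤ k) (hi : 2 * i ≤ k - 1) :
    Squant (k + 1) (i + 1) = 2 * Squant k i := by
  rw [Squant_closed (k+1) (i+1) (by omega), Squant_closed k i (by omega)]
  rw [show (k+1) - (i+1) = k - i by omega,
    show (k+1) - 2*(i+1) = (k - 2*i) - 1 by omega]
  have h1 : 1 ≤ k - 2*i := by omega
  have h2 : (2:ℝ) ^ (k - 2*i) = 2 * 2 ^ (k - 2*i - 1) := by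
    rw [← pow_succ']
    congr 1
    omega
  rw [h2]
  have hne : (2:ℝ) ^ (k - 2*i - 1) ≠ 0 := by positivity
  field_simp
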